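/- Let H ≤ G be groups with [G : H] finite, and let M be a representation of H over a commutative ring k. Then the first group cohomology of G with coefficients in the coinduced representation Coind_H^G M is naturally isomorphic to the first group cohomology of H with coefficients in M (Shapiro's lemma in degree 1). -/

import Mathlib

variable {k G M : Type} [CommRing k] [Group G] {H : Subgroup G}
  [AddCommGroup M] [Module k M]

/-- The underlying module of the coinduced representation `Coind_H^G M`:
`H`-equivariant functions `G → M`, i.e. `Hom_{k[H]}(k[G], M)`. -/
def coindCarrier (ρ : Representation k H M) : Submodule k (G → M) where
  carrier := {f | ∀ (h : H) (g : G), f ((h : G) * g) = ρ h (f g)}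
  add_mem' := by
    intro a b ha hb h g
    simp [ha h g, hb h g]
  zero_mem' := by intro h g; simp
  smul_mem' := by
    intro c f hf h g
    simp [hf h g]

/-- The coinduced representation of `ρ` from `H` to `G`: `G` acts on
`H`-equivariant functions `G → M` by right translation. -/
def coindRep (ρ : Representation k H M) : Representation k G (coindCarrier ρ) where
  toFun g :=
    { toFun := fun f => ⟨fun x => (f : G → M) (x * g), by
        intro h x
        show (f : G → M) ((h : G) * x * g) = ρ h ((f : G → M) (x * g))
        rw [mul_assoc]
        exact f.2 h (x * g)⟩
      map_add' := by intro a b; ext x; rfl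
      map_smul' := by intro c f; ext x; rfl }
  map_one' := by
    ext f x
    simp
  map_mul' := by
    intro g₁ g₂
    ext f x
    simp [mul_assoc]

namespace Shapiro1

open groupCohomology

section Compat

variable {k' G' : Type} [CommRing k'] [Group G']

abbrev oneCocycles (A : Rep k' G') : Submodule k' (G' → A) := cocycles₁ A

abbrev oneCoboundaries (A : Rep k' G') : Submodule k' (oneCocycles A) :=
  LinearMap.range (shortComplexH1 A).moduleCatToCycles

abbrev oneH1 (A : Rep k' G') := oneCocycles A ⧸ oneCoboundaries A

lemma mem_oneCocycles_iff {A : Rep k' G'} (f : G' → A) :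
    f ∈ oneCocycles A ↔ ∀ g h : G', f (g * h) = A.ρ g (f h) + f g :=
  mem_cocycles₁_iff f

lemma oneCocycles.val_eq_coe {A : Rep k' G'} (f : oneCocycles A) : f.1 = f := rfl

noncomputable def isoH1 (A : Rep k' G') : groupCohomology A 1 ≅ ModuleCat.of k' (oneH1 A) :=
  H1Iso A

end Compat

/-- A choice of right coset representatives. -/
noncomputable def sec (H : Subgroup G) (g : G) : G :=
  (Quotient.mk (QuotientGroup.rightRel H) g).out

lemma sec_mem (g : G) : g * (sec H g)⁻¹ ∈ H :=
  (QuotientGroup.rightRel_apply).1 (Quotient.mk_out (s := QuotientGroup.rightRel H) g)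

lemma sec_mul (h : H) (g : G) : sec H ((h : G) * g) = sec H g := by
  unfold sec
  congr 1
  exact Quotient.sound ((QuotientGroup.rightRel_apply).2 (by simp [mul_assoc, H.inv_mem h.2]))

/-- The `H`-part of `g` relative to the chosen coset representatives. -/
noncomputable def hpart (H : Subgroup G) (g : G) : H := ⟨g * (sec H g)⁻¹, sec_mem g⟩

lemma hpart_mul (h : H) (g : G) : hpart H ((h : G) * g) = h * hpart H g := by
  ext
  simp [hpart, sec_mul, mul_assoc]


open groupCohomology

variable (ρ : Representation k H M)

/-- Evaluation at `1` on cocycles: the "down" map. -/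
def Dcoc : oneCocycles (Rep.of (coindRep ρ)) →ₗ[k] oneCocycles (Rep.of ρ) where
  toFun c := ⟨fun h => ((c : G → coindCarrier ρ) (h : G)).1 1, by
    rw [mem_oneCocycles_iff]
    intro h₁ h₂
    have hc := (mem_oneCocycles_iff (A := Rep.of (coindRep ρ))
      (c : G → coindCarrier ρ)).1 c.2 (h₁ : G) (h₂ : G)
    have h1 := congrArg (fun f : coindCarrier ρ => f.1 1) hc
    simp only at h1
    push_cast
    rw [h1]
    show ((c : G → coindCarrier ρ) (h₂ : G)).1 (1 * (h₁:G)) + _ = _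
    rw [one_mul, show ((h₁ : G)) = (h₁ : G) * 1 by simp,
      ((c : G → coindCarrier ρ) (h₂ : G)).2 h₁ 1]⟩
  map_add' c₁ c₂ := rfl
  map_smul' r c := rfl


variable (ρ : Representation k H M)

open groupCohomology

/-- The value of a cocycle for `H`, as an element of `M`. -/
def bval (b : oneCocycles (Rep.of ρ)) (h : H) : M := b.1 h

/-- The extension of a 1-cocycle `b : H → M` to `G` using coset representatives. -/
noncomputable def ext (b : oneCocycles (Rep.of ρ)) (y : G) : M := b (hpart H y)

lemma ext_mul (b : oneCocycles (Rep.of ρ)) (h : H) (y : G) :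
    ext ρ b ((h : G) * y) = ρ h (ext ρ b y) + bval ρ b h := by
  unfold ext
  show bval ρ b (hpart H ((h:G) * y)) = ρ h (bval ρ b (hpart H y)) + bval ρ b h
  rw [hpart_mul]
  have := (mem_oneCocycles_iff (A := Rep.of ρ) (b : ↥H → (Rep.of ρ))).1 b.2 h (hpart H y)
  exact this

/-- The underlying `H`-equivariant function of the value of the "up" map. -/
noncomputable def upFun (b : oneCocycles (Rep.of ρ)) (g : G) : coindCarrier ρ :=
  ⟨fun x => ext ρ b (x * g) - ext ρ b x, by
    intro h x
    show ext ρ b ((h : G) * x * g) - ext ρ b ((h : G) * x) = _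
    rw [mul_assoc, ext_mul, ext_mul]
    simp [map_sub]⟩

lemma upFun_mem : ∀ b : oneCocycles (Rep.of ρ),
    upFun ρ b ∈ oneCocycles (Rep.of (coindRep ρ)) := by
  intro b
  rw [mem_oneCocycles_iff]
  intro g₁ g₂
  apply Subtype.ext
  funext x
  show ext ρ b (x * (g₁ * g₂)) - ext ρ b x =
    (ext ρ b (x * g₁ * g₂) - ext ρ b (x * g₁)) + (ext ρ b (x * g₁) - ext ρ b x)
  rw [← mul_assoc]
  abel

/-- The "up" map on cocycles. -/
noncomputable def Ucoc : oneCocycles (Rep.of ρ) →ₗ[k] oneCocycles (Rep.of (coindRep ρ)) where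
  toFun b := ⟨upFun ρ b, upFun_mem ρ b⟩
  map_add' b₁ b₂ := by
    apply Subtype.ext; funext g; apply Subtype.ext; funext x
    show (ext ρ (b₁ + b₂) (x * g) - ext ρ (b₁ + b₂) x) =
      (ext ρ b₁ (x * g) - ext ρ b₁ x) + (ext ρ b₂ (x * g) - ext ρ b₂ x)
    show (bval ρ (b₁ + b₂) _ - bval ρ (b₁ + b₂) _) = _
    show (bval ρ b₁ _ + bval ρ b₂ _) - (bval ρ b₁ _ + bval ρ b₂ _) = _
    simp only [ext, bval, oneCocycles.val_eq_coe]
    abel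
  map_smul' r b := by
    apply Subtype.ext; funext g; apply Subtype.ext; funext x
    show (ext ρ (r • b) (x * g) - ext ρ (r • b) x) =
      r • (ext ρ b (x * g) - ext ρ b x)
    show (bval ρ (r • b) _ - bval ρ (r • b) _) = _
    show (r • bval ρ b _) - (r • bval ρ b _) = _
    simp only [ext, bval, oneCocycles.val_eq_coe]
    rw [smul_sub]


variable (ρ : Representation k H M)

open groupCohomology

lemma memB (c : oneCocycles (Rep.of ρ)) (x : M)
    (h : ∀ g : H, ρ g x - x = bval ρ c g) : c ∈ oneCoboundaries (Rep.of ρ) :=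
  ⟨x, Subtype.ext (funext fun g => h g)⟩

lemma memA (c : oneCocycles (Rep.of (coindRep ρ))) (x : coindCarrier ρ)
    (h : ∀ g x' : G, x.1 (x' * g) - x.1 x' = ((c : G → coindCarrier ρ) g).1 x') :
    c ∈ oneCoboundaries (Rep.of (coindRep ρ)) :=
  ⟨x, Subtype.ext (funext fun g => Subtype.ext (funext fun x' => h g x'))⟩

lemma bval_Dcoc (c : oneCocycles (Rep.of (coindRep ρ))) (h : H) :
    bval ρ (Dcoc ρ c) h = ((c : G → coindCarrier ρ) (h : G)).1 1 := rfl

lemma heval (c : oneCocycles (Rep.of (coindRep ρ))) (g₁ g₂ : G) :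
    ((c : G → coindCarrier ρ) (g₁ * g₂)).1 1 =
      ((c : G → coindCarrier ρ) g₂).1 g₁ + ((c : G → coindCarrier ρ) g₁).1 1 := by
  have hcoc := (mem_oneCocycles_iff (A := Rep.of (coindRep ρ))
    (c : G → coindCarrier ρ)).1 c.2 g₁ g₂
  have h0 := congrArg (fun f : coindCarrier ρ => f.1 1) hcoc
  simp only at h0
  rw [h0]
  have h2 : ((coindRep ρ g₁) ((c : G → coindCarrier ρ) g₂)).1 1 =
      ((c : G → coindCarrier ρ) g₂).1 g₁ := by
    show ((c : G → coindCarrier ρ) g₂).1 (1 * g₁) = _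
    rw [one_mul]
  show ((coindRep ρ g₁) ((c : G → coindCarrier ρ) g₂)).1 1 +
      ((c : G → coindCarrier ρ) g₁).1 1 = _
  rw [h2]

lemma coind_eq (f : coindCarrier ρ) (h : H) :
    f.1 (h : G) = ρ h (f.1 1) := by
  rw [show ((h : G)) = (h : G) * 1 by simp, f.2 h 1]

lemma Dcoc_coboundary (c : oneCocycles (Rep.of (coindRep ρ)))
    (hc : c ∈ oneCoboundaries (Rep.of (coindRep ρ))) :
    Dcoc ρ c ∈ oneCoboundaries (Rep.of ρ) := by
  obtain ⟨f, hf⟩ := hc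
  have hf2 : ∀ g : G, ((c : G → coindCarrier ρ) g).1 1 =
      (f : coindCarrier ρ).1 (1 * g) - (f : coindCarrier ρ).1 1 := by
    intro g
    rw [← hf]
    rfl
  refine memB ρ (Dcoc ρ c) ((f : coindCarrier ρ).1 1) ?_
  intro h
  rw [bval_Dcoc, hf2, one_mul]
  exact congrArg (· - (f : coindCarrier ρ).1 1) (coind_eq ρ (f : coindCarrier ρ) h).symm

lemma key (c : oneCocycles (Rep.of (coindRep ρ)))
    (hc : Dcoc ρ c ∈ oneCoboundaries (Rep.of ρ)) :
    c ∈ oneCoboundaries (Rep.of (coindRep ρ)) := by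
  obtain ⟨m₀', hm₀⟩ := hc
  let m₀ : M := m₀'
  have hm : ∀ h : H, ρ h m₀ - m₀ = ((c : G → coindCarrier ρ) (h : G)).1 1 :=
    fun h => congrFun (congrArg Subtype.val hm₀) h
  refine memA ρ c
    (⟨fun x => ((c : G → coindCarrier ρ) x).1 1 + m₀, ?_⟩ : coindCarrier ρ) ?_
  · intro h x
    show ((c : G → coindCarrier ρ) ((h : G) * x)).1 1 + m₀ = _
    rw [heval ρ c (h : G) x, coind_eq ρ _ h, ← hm h]
    simp only [map_add]
    abel
  · intro g x'
    show (((c : G → coindCarrier ρ) (x' * g)).1 1 + m₀) -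
        (((c : G → coindCarrier ρ) x').1 1 + m₀) = _
    rw [heval ρ c x' g]
    abel

lemma DU (b : oneCocycles (Rep.of ρ)) :
    Dcoc ρ (Ucoc ρ b) - b ∈ oneCoboundaries (Rep.of ρ) := by
  refine memB ρ _ (bval ρ b (hpart H 1)) ?_
  intro h
  show ρ h (bval ρ b (hpart H 1)) - bval ρ b (hpart H 1) =
    (ext ρ b (1 * (h : G)) - ext ρ b 1) - bval ρ b h
  rw [one_mul]
  have h1 : ext ρ b ((h : G)) = ρ h (bval ρ b (hpart H 1)) + bval ρ b h := by
    have h2 := ext_mul ρ b h 1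
    rw [mul_one] at h2
    exact h2
  rw [h1]
  show _ = _ - bval ρ b (hpart H 1) - bval ρ b h
  abel

noncomputable def h1equiv : oneH1 (Rep.of (coindRep ρ)) ≃ₗ[k] oneH1 (Rep.of ρ) := by
  refine LinearEquiv.ofLinear
    (Submodule.mapQ _ _ (Dcoc ρ) (fun c hc => Dcoc_coboundary ρ c hc))
    (Submodule.mapQ _ _ (Ucoc ρ) (fun b hb => key ρ _ (by
      rw [← sub_add_cancel (Dcoc ρ (Ucoc ρ b)) b]
      exact add_mem (DU ρ b) hb))) ?_ ?_
  · apply Submodule.linearMap_qext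
    ext b
    show Submodule.Quotient.mk (Dcoc ρ (Ucoc ρ b)) = Submodule.Quotient.mk b
    rw [Submodule.Quotient.eq]
    exact DU ρ b
  · apply Submodule.linearMap_qext
    ext c
    show Submodule.Quotient.mk (Ucoc ρ (Dcoc ρ c)) = Submodule.Quotient.mk c
    rw [Submodule.Quotient.eq]
    refine key ρ _ ?_
    rw [map_sub]
    exact DU ρ (Dcoc ρ c)

end Shapiro1


/-- Shapiro's lemma in degree 1: for `H ≤ G` of finite index and a
representation `M` of `H`, the first group cohomology of `G` with coefficients
in `Coind_H^G M` is isomorphic to the first group cohomology of `H` with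
coefficients in `M`. -/
theorem stmt_17 (H : Subgroup G) [H.FiniteIndex] (ρ : Representation k H M) :
    Nonempty (groupCohomology (Rep.of (coindRep ρ)) 1 ≅
      groupCohomology (Rep.of ρ) 1) := by
  exact ⟨(Shapiro1.isoH1 (Rep.of (coindRep ρ))) ≪≫
    (Shapiro1.h1equiv ρ).toModuleIso ≪≫ (Shapiro1.isoH1 (Rep.of ρ)).symm⟩
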